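/- Let n ≥ 3 be an integer. Suppose h₁₁ : (0,∞) → ℝ, h_{1i} : (0,∞) → ℝ for i = 2, …, n, and h_{ij} = h_{ji} : (0,∞) → ℝ for i, j = 2, …, n are twice differentiable functions satisfying the system: (I) r²·(r²h₁₁)'' + n·r·(r²h₁₁)' − 2(n−1)·(r²h₁₁) = 0; (II) r²·h_{1i}'' + n·r·h_{1i}' − n·h_{1i} = 0 for each i = 2, …, n; (III) r²·(r^{−2}h_{ij})'' + n·r·(r^{−2}h_{ij})' − 2·δ_{ij}·Σ_{k=2}^n r^{−2}h_{kk} = 0 for all i, j = 2, …, n (δ_{ij} the Kronecker delta). Assume the growth bounds r²·|h₁₁(r)| ≤ r^{0.1} + r^{−0.1}, |h_{1i}(r)| ≤ r^{0.1} + r^{−0.1}, and r^{−2}·|h_{ij}(r)| ≤ r^{0.1} + r^{−0.1} for all r > 0 and all i, j = 2, …, n. Then h₁₁ ≡ 0, h_{1i} ≡ 0 for all i = 2, …, n, and there exists a constant symmetric matrix (u_{ij})_{2 ≤ i,j ≤ n} with Σ_{k=2}^n u_{kk} = 0 such that h_{ij}(r) = u_{ij}·r² for all r > 0 and all i, j =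 2, …, n. -/

import Mathlib

lemma const_of_hasDerivAt_zero (φ : ℝ → ℝ) (hφ : ∀ r > (0:ℝ), HasDerivAt φ 0 r) :
    ∀ r > (0:ℝ), φ r = φ 1 := by
  intro r hr
  have hdiff : DifferentiableOn ℝ φ (Set.Ioi 0) := fun x hx =>
    ((hφ x hx).differentiableAt).differentiableWithinAt
  have hf' : ∀ x ∈ Set.Ioi (0:ℝ), fderivWithin ℝ φ (Set.Ioi 0) x = 0 := by
    intro x hx
    have h1 := ((hφ x hx).hasFDerivAt.hasFDerivWithinAt).fderivWithin
      (isOpen_Ioi.uniqueDiffWithinAt hx)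
    rw [h1]; ext y; simp
  exact (convex_Ioi (0:ℝ)).is_const_of_fderivWithin_eq_zero hdiff hf' hr (by norm_num)

lemma euler_solve (a b lam1 lam2 : ℝ) (hne : lam1 ≠ lam2)
    (hsum : lam1 + lam2 = 1 - a) (hprod : lam1 * lam2 = b)
    (f f' f'' : ℝ → ℝ)
    (hf : ∀ r > (0:ℝ), HasDerivAt f (f' r) r)
    (hf' : ∀ r > (0:ℝ), HasDerivAt f' (f'' r) r)
    (heq : ∀ r > (0:ℝ), r^2 * f'' r + a * r * f' r + b * f r = 0) :
    ∃ A B : ℝ, ∀ r > (0:ℝ), f r = A * r ^ lam2 + B * r ^ lam1 := by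
  set g : ℝ → ℝ := fun r => r * f' r - lam2 * f r with hgdef
  have hg : ∀ r > (0:ℝ), HasDerivAt g (f' r + r * f'' r - lam2 * f' r) r := by
    intro r hr
    have h1 : HasDerivAt (fun s => s * f' s) (1 * f' r + r * f'' r) r :=
      (hasDerivAt_id r).mul (hf' r hr)
    have h2 := ((hf r hr).const_mul lam2)
    have h3 := h1.sub h2
    simp only [one_mul] at h3
    exact h3
  -- step 1: r ^ (-lam1) * g r is constant
  have hφ1 : ∀ r > (0:ℝ), HasDerivAt (fun s => s ^ (-lam1) * g s) 0 r := by
    intro r hr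
    have hrp : HasDerivAt (fun s : ℝ => s ^ (-lam1)) ((-lam1) * r ^ (-lam1 - 1)) r :=
      Real.hasDerivAt_rpow_const (Or.inl hr.ne')
    have hmul := hrp.mul (hg r hr)
    refine hmul.congr_deriv (Eq.symm ?_)
    have hrw : r ^ (-lam1) = r ^ (-lam1 - 1) * r := by
      rw [← Real.rpow_add_one hr.ne']; congr 1; ring
    rw [hrw]
    have he := heq r hr
    simp only [hgdef]
    linear_combination (-(r ^ (-lam1 - 1))) * he + (r ^ (-lam1 - 1) * r * f' r) * hsum
      - (r ^ (-lam1 - 1) * f r) * hprod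
  have hc1 := const_of_hasDerivAt_zero _ hφ1
  set C : ℝ := g 1 with hCdef
  have hgC : ∀ r > (0:ℝ), g r = C * r ^ lam1 := by
    intro r hr
    have h1 := hc1 r hr
    have h2 : (1:ℝ) ^ (-lam1) = 1 := Real.one_rpow _
    rw [h2, one_mul] at h1
    have h3 : r ^ (-lam1) * r ^ lam1 = 1 := by
      rw [← Real.rpow_add hr]; simp
    calc g r = (r ^ (-lam1) * g r) * r ^ lam1 := by
          rw [mul_comm (r ^ (-lam1)) (g r), mul_assoc, h3, mul_one]
      _ = C * r ^ lam1 := by rw [h1]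
  -- step 2
  set B : ℝ := C / (lam1 - lam2) with hBdef
  have hlamne : lam1 - lam2 ≠ 0 := sub_ne_zero.mpr hne
  have hφ2 : ∀ r > (0:ℝ),
      HasDerivAt (fun s => s ^ (-lam2) * f s - B * s ^ (lam1 - lam2)) 0 r := by
    intro r hr
    have hrp : HasDerivAt (fun s : ℝ => s ^ (-lam2)) ((-lam2) * r ^ (-lam2 - 1)) r :=
      Real.hasDerivAt_rpow_const (Or.inl hr.ne')
    have h1 := hrp.mul (hf r hr)
    have hrp2 : HasDerivAt (fun s : ℝ => s ^ (lam1 - lam2))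
        ((lam1 - lam2) * r ^ (lam1 - lam2 - 1)) r :=
      Real.hasDerivAt_rpow_const (Or.inl hr.ne')
    have h2 := hrp2.const_mul B
    refine (h1.sub h2).congr_deriv (Eq.symm ?_)
    have hrw1 : r ^ (-lam2) = r ^ (-lam2 - 1) * r := by
      rw [← Real.rpow_add_one hr.ne']; congr 1; ring
    have hrw2 : r ^ (lam1 - lam2 - 1) = r ^ (-lam2 - 1) * r ^ lam1 := by
      rw [← Real.rpow_add hr]; congr 1; ring
    have hBC : B * (lam1 - lam2) = C := by
      rw [hBdef]; field_simp
    have hgr := hgC r hr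
    simp only [hgdef] at hgr
    rw [hrw1, hrw2]
    linear_combination (-(r ^ (-lam2 - 1))) * hgr + (r ^ (-lam2 - 1) * r ^ lam1) * hBC
  have hc2 := const_of_hasDerivAt_zero _ hφ2
  refine ⟨(1:ℝ) ^ (-lam2) * f 1 - B * (1:ℝ) ^ (lam1 - lam2), B, ?_⟩
  intro r hr
  have h1 := hc2 r hr
  set A := (1:ℝ) ^ (-lam2) * f 1 - B * (1:ℝ) ^ (lam1 - lam2) with hAdef
  have h3 : r ^ (-lam2) * r ^ lam2 = 1 := by
    rw [← Real.rpow_add hr]; simp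
  have h4 : r ^ (lam1 - lam2) * r ^ lam2 = r ^ lam1 := by
    rw [← Real.rpow_add hr]; ring_nf
  have e1 : r ^ (-lam2) * f r * r ^ lam2 = f r := by
    rw [mul_comm (r ^ (-lam2)) (f r), mul_assoc, h3, mul_one]
  have key : f r = (r ^ (-lam2) * f r - B * r ^ (lam1 - lam2)) * r ^ lam2
      + B * r ^ lam1 := by
    rw [sub_mul, e1, mul_assoc B, h4]; ring
  rw [← h1]; exact key

lemma eq_zero_of_le_tendsto (A : ℝ) (g : ℝ → ℝ)
    (hg : Filter.Tendsto g Filter.atTop (nhds 0))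
    (h : ∀ r ≥ (1:ℝ), |A| ≤ g r) : A = 0 := by
  have h0 : |A| ≤ 0 := ge_of_tendsto hg (Filter.eventually_atTop.2 ⟨1, h⟩)
  exact abs_nonpos_iff.mp h0

lemma tendsto_cmul_rpow (c e : ℝ) (he : e < 0) :
    Filter.Tendsto (fun r : ℝ => c * r ^ e) Filter.atTop (nhds 0) := by
  have h := tendsto_rpow_neg_atTop (show (0:ℝ) < -e by linarith)
  have h2 : Filter.Tendsto (fun r : ℝ => r ^ e) Filter.atTop (nhds 0) := by
    simpa using h
  simpa using h2.const_mul c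

lemma inv_rpow_eq (s y : ℝ) (hs : 0 < s) : (s⁻¹ : ℝ) ^ y = s ^ (-y) := by
  rw [Real.inv_rpow hs.le, ← Real.rpow_neg hs.le]

lemma coeff_top_zero (C lam1 lam2 A B : ℝ) (hC : 0 ≤ C)
    (h1 : (0.1:ℝ) < lam1) (h2 : lam2 ≤ 0)
    (hb : ∀ r > (0:ℝ), |A * r ^ lam2 + B * r ^ lam1| ≤ C * (r ^ (0.1:ℝ) + r ^ (-0.1:ℝ))) :
    B = 0 := by
  apply eq_zero_of_le_tendsto B (fun r => |A| * r ^ (-lam1) + 2 * C * r ^ ((0.1:ℝ) - lam1))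
  · have t1 := tendsto_cmul_rpow |A| (-lam1) (by linarith)
    have t2 := tendsto_cmul_rpow (2 * C) ((0.1:ℝ) - lam1) (by linarith)
    simpa using t1.add t2
  · intro r hr1
    have hr : (0:ℝ) < r := lt_of_lt_of_le one_pos hr1
    have hb' := hb r hr
    have a1 : |B * r ^ lam1| ≤ |A * r ^ lam2 + B * r ^ lam1| + |A * r ^ lam2| := by
      calc |B * r ^ lam1| = |(A * r ^ lam2 + B * r ^ lam1) - A * r ^ lam2| := by ring_nf
        _ ≤ _ := abs_sub _ _
    have a2 : |A * r ^ lam2| ≤ |A| := by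
      rw [abs_mul, abs_of_pos (Real.rpow_pos_of_pos hr _)]
      calc |A| * r ^ lam2 ≤ |A| * 1 := by
            have := Real.rpow_le_one_of_one_le_of_nonpos hr1 h2
            exact mul_le_mul_of_nonneg_left this (abs_nonneg A)
        _ = |A| := mul_one _
    have a3 : r ^ (-0.1:ℝ) ≤ r ^ (0.1:ℝ) :=
      Real.rpow_le_rpow_of_exponent_le hr1 (by norm_num)
    have e1 : |B| * r ^ lam1 ≤ |A| + 2 * C * r ^ (0.1:ℝ) := by
      have : |B| * r ^ lam1 = |B * r ^ lam1| := by
        rw [abs_mul, abs_of_pos (Real.rpow_pos_of_pos hr _)]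
      rw [this]
      calc |B * r ^ lam1| ≤ |A * r ^ lam2 + B * r ^ lam1| + |A * r ^ lam2| := a1
        _ ≤ C * (r ^ (0.1:ℝ) + r ^ (-0.1:ℝ)) + |A| := add_le_add hb' a2
        _ ≤ C * (r ^ (0.1:ℝ) + r ^ (0.1:ℝ)) + |A| := by nlinarith
        _ = |A| + 2 * C * r ^ (0.1:ℝ) := by ring
    have hpos : (0:ℝ) < r ^ (-lam1) := Real.rpow_pos_of_pos hr _
    have hinv : r ^ lam1 * r ^ (-lam1) = 1 := by
      rw [← Real.rpow_add hr]; simp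
    have e2 := mul_le_mul_of_nonneg_right e1 hpos.le
    rw [mul_assoc, hinv, mul_one] at e2
    calc |B| ≤ (|A| + 2 * C * r ^ (0.1:ℝ)) * r ^ (-lam1) := e2
      _ = |A| * r ^ (-lam1) + 2 * C * (r ^ (0.1:ℝ) * r ^ (-lam1)) := by ring
      _ = |A| * r ^ (-lam1) + 2 * C * r ^ ((0.1:ℝ) - lam1) := by
          rw [← Real.rpow_add hr]; ring_nf

lemma euler_vanish (a b lam1 lam2 C : ℝ) (hC : 0 ≤ C)
    (h1 : (0.1:ℝ) < lam1) (h2 : lam2 < (-0.1:ℝ))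
    (hsum : lam1 + lam2 = 1 - a) (hprod : lam1 * lam2 = b)
    (f f' f'' : ℝ → ℝ)
    (hf : ∀ r > (0:ℝ), HasDerivAt f (f' r) r)
    (hf' : ∀ r > (0:ℝ), HasDerivAt f' (f'' r) r)
    (heq : ∀ r > (0:ℝ), r ^ 2 * f'' r + a * r * f' r + b * f r = 0)
    (hb : ∀ r > (0:ℝ), |f r| ≤ C * (r ^ (0.1:ℝ) + r ^ (-0.1:ℝ))) :
    ∀ r > (0:ℝ), f r = 0 := by
  have hne : lam1 ≠ lam2 := by intro hq; rw [hq] at h1; linarith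
  obtain ⟨A, B, hAB⟩ := euler_solve a b lam1 lam2 hne hsum hprod f f' f'' hf hf' heq
  have hb2 : ∀ r > (0:ℝ), |A * r ^ lam2 + B * r ^ lam1| ≤ C * (r ^ (0.1:ℝ) + r ^ (-0.1:ℝ)) := by
    intro r hr; rw [← hAB r hr]; exact hb r hr
  have hBz : B = 0 := coeff_top_zero C lam1 lam2 A B hC h1 (by linarith) hb2
  have hAz : A = 0 := by
    apply coeff_top_zero C (-lam2) (-lam1) B A hC (by linarith) (by linarith)
    intro s hs
    have hzi : (0:ℝ) < s⁻¹ := inv_pos.mpr hs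
    have hthis := hb2 s⁻¹ hzi
    rw [inv_rpow_eq s lam2 hs, inv_rpow_eq s lam1 hs, inv_rpow_eq s (0.1:ℝ) hs,
      inv_rpow_eq s (-0.1:ℝ) hs, neg_neg] at hthis
    calc |B * s ^ (-lam1) + A * s ^ (-lam2)| = |A * s ^ (-lam2) + B * s ^ (-lam1)| := by
          rw [add_comm]
      _ ≤ C * (s ^ (-0.1:ℝ) + s ^ (0.1:ℝ)) := hthis
      _ = C * (s ^ (0.1:ℝ) + s ^ (-0.1:ℝ)) := by ring
  intro r hr
  rw [hAB r hr, hAz, hBz]; ring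

lemma euler_const (a lam2 : ℝ) (h2 : lam2 < (-0.1:ℝ)) (hsum : 0 + lam2 = 1 - a)
    (f f' f'' : ℝ → ℝ)
    (hf : ∀ r > (0:ℝ), HasDerivAt f (f' r) r)
    (hf' : ∀ r > (0:ℝ), HasDerivAt f' (f'' r) r)
    (heq : ∀ r > (0:ℝ), r ^ 2 * f'' r + a * r * f' r + 0 * f r = 0)
    (hb : ∀ r > (0:ℝ), |f r| ≤ r ^ (0.1:ℝ) + r ^ (-0.1:ℝ)) :
    ∀ r > (0:ℝ), f r = f 1 := by
  have hne : (0:ℝ) ≠ lam2 := by linarith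
  obtain ⟨A, B, hAB⟩ := euler_solve a 0 0 lam2 hne hsum (by ring) f f' f'' hf hf' heq
  have hAB' : ∀ r > (0:ℝ), f r = A * r ^ lam2 + B := by
    intro r hr
    have := hAB r hr
    rwa [Real.rpow_zero, mul_one] at this
  have hAz : A = 0 := by
    apply coeff_top_zero 1 (-lam2) 0 B A zero_le_one (by linarith) le_rfl
    intro s hs
    have hzi : (0:ℝ) < s⁻¹ := inv_pos.mpr hs
    have hthis : |A * (s⁻¹) ^ lam2 + B| ≤ (s⁻¹) ^ (0.1:ℝ) + (s⁻¹) ^ (-0.1:ℝ) := by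
      rw [← hAB' s⁻¹ hzi]; exact hb s⁻¹ hzi
    rw [inv_rpow_eq s lam2 hs, inv_rpow_eq s (0.1:ℝ) hs,
      inv_rpow_eq s (-0.1:ℝ) hs, neg_neg] at hthis
    rw [Real.rpow_zero, mul_one]
    calc |B + A * s ^ (-lam2)| = |A * s ^ (-lam2) + B| := by rw [add_comm]
      _ ≤ s ^ (-0.1:ℝ) + s ^ (0.1:ℝ) := hthis
      _ = 1 * (s ^ (0.1:ℝ) + s ^ (-0.1:ℝ)) := by ring
  intro r hr
  have h1 := hAB' 1 one_pos
  rw [hAB' r hr, hAz, h1, hAz]; ring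

lemma euler_roots (c : ℝ) (hc : 3 ≤ c) :
    ∃ lam1 lam2 : ℝ, (0.1:ℝ) < lam1 ∧ lam2 < (-0.1:ℝ) ∧
      lam1 + lam2 = 1 - c ∧ lam1 * lam2 = -(2*(c-1)) := by
  have hD0 : (0:ℝ) ≤ (c-1)^2 + 8*(c-1) := by nlinarith
  have hsq : Real.sqrt ((c-1)^2 + 8*(c-1)) ^ 2 = (c-1)^2 + 8*(c-1) := Real.sq_sqrt hD0
  refine ⟨(1 - c + Real.sqrt ((c-1)^2 + 8*(c-1)))/2,
      (1 - c - Real.sqrt ((c-1)^2 + 8*(c-1)))/2, ?_, ?_, by ring,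
      by linear_combination (-(1:ℝ)/4) * hsq⟩
  · have hlt : c - 1 + 0.2 < Real.sqrt ((c-1)^2 + 8*(c-1)) :=
      (Real.lt_sqrt (by linarith)).mpr (by nlinarith)
    linarith
  · have := Real.sqrt_nonneg ((c-1)^2 + 8*(c-1))
    linarith


/-- **Einstein variations of the hyperbolic cusp metric** (Proposition 7.1 of the paper).
An `ℝ^{n-1}`-invariant solution `h` of the linearized Einstein equation on the hyperbolic
cusp, written in coordinates as the system (I)-(III) for the components
`h₁₁`, `h_{1i}`, `h_{ij}` (`i, j = 2, …, n`, here indexed by `Fin (n-1)`),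
with `|h| ≤ r^{0.1} + r^{-0.1}`, is a trivial Einstein variation:
`h₁₁ ≡ 0`, `h_{1i} ≡ 0` and `h_{ij}(r) = u_{ij} r²` for a constant traceless
symmetric matrix `u`. -/
theorem cusp_einstein_variation_trivial (n : ℕ) (hn : 3 ≤ n)
    (h11 : ℝ → ℝ) (h1 : Fin (n - 1) → ℝ → ℝ) (h : Fin (n - 1) → Fin (n - 1) → ℝ → ℝ)
    (hsym : ∀ i j, h i j = h j i)
    -- (I): the equation for r² h₁₁
    (F' F'' : ℝ → ℝ)
    (hF1 : ∀ r > (0 : ℝ), HasDerivAt (fun s => s ^ 2 * h11 s) (F' r) r)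
    (hF2 : ∀ r > (0 : ℝ), HasDerivAt F' (F'' r) r)
    (hI : ∀ r > (0 : ℝ),
      r ^ 2 * F'' r + (n : ℝ) * r * F' r - 2 * ((n : ℝ) - 1) * (r ^ 2 * h11 r) = 0)
    -- (II): the equations for h_{1i}
    (h1' h1'' : Fin (n - 1) → ℝ → ℝ)
    (hd1 : ∀ i, ∀ r > (0 : ℝ), HasDerivAt (h1 i) (h1' i r) r)
    (hd2 : ∀ i, ∀ r > (0 : ℝ), HasDerivAt (h1' i) (h1'' i r) r)
    (hII : ∀ i, ∀ r > (0 : ℝ),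
      r ^ 2 * h1'' i r + (n : ℝ) * r * h1' i r - (n : ℝ) * h1 i r = 0)
    -- (III): the equations for r^{-2} h_{ij}
    (G' G'' : Fin (n - 1) → Fin (n - 1) → ℝ → ℝ)
    (hG1 : ∀ i j, ∀ r > (0 : ℝ), HasDerivAt (fun s => h i j s / s ^ 2) (G' i j r) r)
    (hG2 : ∀ i j, ∀ r > (0 : ℝ), HasDerivAt (G' i j) (G'' i j r) r)
    (hIII : ∀ i j, ∀ r > (0 : ℝ),
      r ^ 2 * G'' i j r + (n : ℝ) * r * G' i j r
        - 2 * (if i = j then (1 : ℝ) else 0) * (∑ k, h k k r / r ^ 2) = 0)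
    -- growth bounds expressing |h| ≤ r^{0.1} + r^{-0.1}
    (hb1 : ∀ r > (0 : ℝ), r ^ 2 * |h11 r| ≤ r ^ (0.1 : ℝ) + r ^ (-0.1 : ℝ))
    (hb2 : ∀ i, ∀ r > (0 : ℝ), |h1 i r| ≤ r ^ (0.1 : ℝ) + r ^ (-0.1 : ℝ))
    (hb3 : ∀ i j, ∀ r > (0 : ℝ), |h i j r| / r ^ 2 ≤ r ^ (0.1 : ℝ) + r ^ (-0.1 : ℝ)) :
    (∀ r > (0 : ℝ), h11 r = 0)
    ∧ (∀ i, ∀ r > (0 : ℝ), h1 i r = 0)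
    ∧ ∃ u : Fin (n - 1) → Fin (n - 1) → ℝ,
        (∀ i j, u i j = u j i) ∧ (∑ k, u k k = 0) ∧
        ∀ i j, ∀ r > (0 : ℝ), h i j r = u i j * r ^ 2 := by
  set c : ℝ := (n : ℝ) with hcdef
  have hc : (3:ℝ) ≤ c := by rw [hcdef]; exact_mod_cast hn
  obtain ⟨lam1, lam2, hl1, hl2, hls, hlp⟩ := euler_roots c hc
  -- Part (I)
  have part1 : ∀ r > (0:ℝ), h11 r = 0 := by
    have hz := euler_vanish c (-(2*(c-1))) lam1 lam2 1 zero_le_one hl1 hl2 hls hlp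
      (fun s => s ^ 2 * h11 s) F' F'' hF1 hF2
      (by intro r hr
          show r ^ 2 * F'' r + c * r * F' r + (-(2*(c-1))) * (r ^ 2 * h11 r) = 0
          have := hI r hr; linarith)
      (by intro r hr
          have : |r ^ 2 * h11 r| = r ^ 2 * |h11 r| := by
            rw [abs_mul, abs_of_pos (pow_pos hr 2)]
          rw [one_mul]
          show |r ^ 2 * h11 r| ≤ _
          rw [this]; exact hb1 r hr)
    intro r hr
    have h0 := hz r hr
    have hr2 : r ^ 2 ≠ 0 := pow_ne_zero 2 hr.ne'
    exact (mul_eq_zero.mp h0).resolve_left hr2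
  refine ⟨part1, ?_, ?_⟩
  -- Part (II)
  · intro i
    exact euler_vanish c (-c) 1 (-c) 1 zero_le_one (by norm_num) (by linarith)
      (by ring) (by ring) (h1 i) (h1' i) (h1'' i) (hd1 i) (hd2 i)
      (by intro r hr; have := hII i r hr; linarith)
      (by intro r hr; rw [one_mul]; exact hb2 i r hr)
  -- Part (III)
  · have hn1 : ((n - 1 : ℕ) : ℝ) = c - 1 := by
      rw [hcdef]; push_cast [Nat.cast_sub (by omega : 1 ≤ n)]; ring
    set T : ℝ → ℝ := fun s => ∑ k : Fin (n-1), h k k s / s ^ 2 with hTdef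
    set T' : ℝ → ℝ := fun r => ∑ k : Fin (n-1), G' k k r with hT'def
    set T'' : ℝ → ℝ := fun r => ∑ k : Fin (n-1), G'' k k r with hT''def
    have hT1 : ∀ r > (0:ℝ), HasDerivAt T (T' r) r := by
      intro r hr
      exact HasDerivAt.fun_sum fun k _ => hG1 k k r hr
    have hT2 : ∀ r > (0:ℝ), HasDerivAt T' (T'' r) r := by
      intro r hr
      exact HasDerivAt.fun_sum fun k _ => hG2 k k r hr
    have heqT : ∀ r > (0:ℝ), r ^ 2 * T'' r + c * r * T' r + (-(2*(c-1))) * T r = 0 := by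
      intro r hr
      have hkey : ∀ k : Fin (n-1), r ^ 2 * G'' k k r + c * r * G' k k r = 2 * T r := by
        intro k
        have := hIII k k r hr
        simp only [eq_self_iff_true, if_true] at this
        have hTr : T r = ∑ k : Fin (n-1), h k k r / r ^ 2 := rfl
        rw [hTr]; linarith
      have hsum : ∑ k : Fin (n-1), (r ^ 2 * G'' k k r + c * r * G' k k r)
          = (c - 1) * (2 * T r) := by
        rw [Finset.sum_congr rfl (fun k _ => hkey k), Finset.sum_const,
          Finset.card_univ, Fintype.card_fin, nsmul_eq_mul, hn1]
      have hexp : r ^ 2 * T'' r + c * r * T' r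
          = ∑ k : Fin (n-1), (r ^ 2 * G'' k k r + c * r * G' k k r) := by
        show r ^ 2 * (∑ k : Fin (n-1), G'' k k r) + c * r * (∑ k : Fin (n-1), G' k k r) = _
        rw [Finset.mul_sum, Finset.mul_sum, ← Finset.sum_add_distrib]
      rw [hexp, hsum]; ring
    have hbT : ∀ r > (0:ℝ), |T r| ≤ (c - 1) * (r ^ (0.1:ℝ) + r ^ (-0.1:ℝ)) := by
      intro r hr
      have h1' : |T r| ≤ ∑ k : Fin (n-1), |h k k r / r ^ 2| :=
        Finset.abs_sum_le_sum_abs _ _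
      have h2' : ∀ k : Fin (n-1), |h k k r / r ^ 2| ≤ r ^ (0.1:ℝ) + r ^ (-0.1:ℝ) := by
        intro k
        have : |h k k r / r ^ 2| = |h k k r| / r ^ 2 := by
          rw [abs_div, abs_of_pos (pow_pos hr 2)]
        rw [this]; exact hb3 k k r hr
      calc |T r| ≤ ∑ k : Fin (n-1), |h k k r / r ^ 2| := h1'
        _ ≤ ∑ _k : Fin (n-1), (r ^ (0.1:ℝ) + r ^ (-0.1:ℝ)) :=
            Finset.sum_le_sum fun k _ => h2' k
        _ = (c - 1) * (r ^ (0.1:ℝ) + r ^ (-0.1:ℝ)) := by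
            rw [Finset.sum_const, Finset.card_univ, Fintype.card_fin, nsmul_eq_mul, hn1]
    have hTz : ∀ r > (0:ℝ), T r = 0 :=
      euler_vanish c (-(2*(c-1))) lam1 lam2 (c-1) (by linarith) hl1 hl2 hls hlp
        T T' T'' hT1 hT2 heqT hbT
    -- each component is constant
    have hconst : ∀ i j, ∀ r > (0:ℝ), h i j r / r ^ 2 = h i j 1 / 1 ^ 2 := by
      intro i j
      have := euler_const c (1 - c) (by linarith) (by ring)
        (fun s => h i j s / s ^ 2) (G' i j) (G'' i j) (hG1 i j) (hG2 i j)
        (by intro r hr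
            have hIII' := hIII i j r hr
            have hterm : 2 * (if i = j then (1:ℝ) else 0) * (∑ k, h k k r / r ^ 2) = 0 := by
              by_cases hij : i = j
              · rw [if_pos hij]
                have := hTz r hr
                have hTr : T r = ∑ k : Fin (n-1), h k k r / r ^ 2 := rfl
                rw [hTr] at this
                rw [this]; ring
              · rw [if_neg hij]; ring
            show r ^ 2 * G'' i j r + c * r * G' i j r + 0 * (h i j r / r ^ 2) = 0
            rw [hterm] at hIII'; linarith)
        (by intro r hr
            have : |h i j r / r ^ 2| = |h i j r| / r ^ 2 := by
              rw [abs_div, abs_of_pos (pow_pos hr 2)]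
            show |h i j r / r ^ 2| ≤ _
            rw [this]; exact hb3 i j r hr)
      exact this
    refine ⟨fun i j => h i j 1, ?_, ?_, ?_⟩
    · intro i j; show h i j 1 = h j i 1; rw [hsym i j]
    · have := hTz 1 one_pos
      have hT1' : T 1 = ∑ k : Fin (n-1), h k k 1 / (1:ℝ) ^ 2 := rfl
      rw [hT1'] at this
      simpa using this
    · intro i j r hr
      have := hconst i j r hr
      have hr2 : (r:ℝ) ^ 2 ≠ 0 := pow_ne_zero 2 hr.ne'
      rw [one_pow, div_one] at this
      field_simp at this
      linarith [this]
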